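/- For every mixed graph G on n ≥ 1 vertices, ν_{2n−1}(G) ≤ 2·a(G)/n ≤ ν₁(G). -/

import Mathlib

set_option linter.unusedSectionVars false

open Matrix Finset Polynomial

variable {V : Type*} [Fintype V] [DecidableEq V]

/-- Undirected adjacency matrix of the mixed graph with edge-multiplicity function `E`:
`(u,v)`-entry `E u v` for `u ≠ v`, and `(v,v)`-entry `2 * E v v`. -/
def Au (E : V → V → ℕ) : Matrix V V ℝ :=
  Matrix.of fun u v => if u = v then ((2 * E v v : ℕ) : ℝ) else ((E u v : ℕ) : ℝ)

/-- Arc matrix of the mixed graph with arc-multiplicity function `A`. -/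
def Bm (A : V → V → ℕ) : Matrix V V ℝ := Matrix.of fun u v => ((A u v : ℕ) : ℝ)

/-- Undirected degree `d v`. -/
def dU (E : V → V → ℕ) (v : V) : ℕ :=
  (∑ u ∈ Finset.univ.filter (fun u => u ≠ v), E v u) + 2 * E v v

/-- Out-degree `d⁺ v`. -/
def dOut (A : V → V → ℕ) (v : V) : ℕ := ∑ u, A v u

/-- In-degree `d⁻ v`. -/
def dIn (A : V → V → ℕ) (v : V) : ℕ := ∑ u, A u v

/-- Integrated adjacency matrix `𝓘(G) = [[Aᵤ, B], [Bᵀ, Aᵤ]]`. -/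
def intAdj (E A : V → V → ℕ) : Matrix (V ⊕ V) (V ⊕ V) ℝ :=
  Matrix.fromBlocks (Au E) (Bm A) (Bm A)ᵀ (Au E)

/-- Integrated degree matrix `𝓘ᴰ(G)`. -/
def intDeg (E A : V → V → ℕ) : Matrix (V ⊕ V) (V ⊕ V) ℝ :=
  Matrix.diagonal (Sum.elim (fun v => ((dU E v + dOut A v : ℕ) : ℝ))
    (fun v => ((dU E v + dIn A v : ℕ) : ℝ)))

/-- Integrated Laplacian matrix `𝓘ᴸ(G) = 𝓘ᴰ(G) - 𝓘(G)`. -/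
def intLap (E A : V → V → ℕ) : Matrix (V ⊕ V) (V ⊕ V) ℝ := intDeg E A - intAdj E A

/-- Integrated signless Laplacian matrix `𝓘Q(G) = 𝓘ᴰ(G) + 𝓘(G)`. -/
def intQ (E A : V → V → ℕ) : Matrix (V ⊕ V) (V ⊕ V) ℝ := intDeg E A + intAdj E A

/-- A mixed graph is simple: multiplicities at most 1, no loops, no directed loops. -/
def IsSimple (E A : V → V → ℕ) : Prop :=
  (∀ u v, E u v ≤ 1) ∧ (∀ u v, A u v ≤ 1) ∧ (∀ v, E v v = 0) ∧ (∀ v, A v v = 0)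

/-- Number of edges (excluding loops): `e(G) = (1/2)·Σ_{u ≠ v} E u v`. -/
noncomputable def numEdges (E : V → V → ℕ) : ℝ :=
  (∑ u, ∑ v ∈ Finset.univ.filter (fun v => v ≠ u), (E u v : ℝ)) / 2

/-- Number of loops: `l(G) = Σ_v E v v`. -/
noncomputable def numLoops (E : V → V → ℕ) : ℝ := ∑ v, (E v v : ℝ)

/-- Number of arcs (including directed loops): `a(G) = Σ_{u,v} A u v`. -/
noncomputable def numArcs (A : V → V → ℕ) : ℝ := ∑ u, ∑ v, (A u v : ℝ)

lemma intAdj_isHermitian (E A : V → V → ℕ) (hE : ∀ u v, E u v = E v u) :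
    (intAdj E A).IsHermitian := by
  have hAu : (Au E)ᵀ = Au E := by
    ext u v
    by_cases h : u = v
    · subst h; rfl
    · simp [Au, Matrix.transpose_apply, h, Ne.symm h, hE u v]
  show (intAdj E A)ᴴ = intAdj E A
  rw [Matrix.conjTranspose_eq_transpose_of_trivial]
  unfold intAdj
  rw [Matrix.fromBlocks_transpose, hAu, Matrix.transpose_transpose]

lemma intLap_isHermitian (E A : V → V → ℕ) (hE : ∀ u v, E u v = E v u) :
    (intLap E A).IsHermitian :=
  (Matrix.isHermitian_diagonal _).sub (intAdj_isHermitian E A hE)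

lemma intQ_isHermitian (E A : V → V → ℕ) (hE : ∀ u v, E u v = E v u) :
    (intQ E A).IsHermitian :=
  (Matrix.isHermitian_diagonal _).add (intAdj_isHermitian E A hE)

/-- The non-increasing rearrangement of a finite tuple of reals. -/
noncomputable def sortDesc {N : ℕ} (f : Fin N → ℝ) : Fin N → ℝ :=
  fun i => (f ∘ Tuple.sort f) i.rev

/-- The eigenvalues of the integrated Laplacian matrix `𝓘ᴸ(G)`, in non-increasing order:
`nuT E A hE i` is `ν_{i+1}(G)` (0-indexed). -/
noncomputable def nuT {n : ℕ} (E A : Fin n → Fin n → ℕ) (hE : ∀ u v, E u v = E v u) :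
    Fin (n + n) → ℝ :=
  sortDesc (fun i => (intLap_isHermitian E A hE).eigenvalues (finSumFinEquiv.symm i))

/-- The eigenvalues of the integrated signless Laplacian matrix `𝓘Q(G)`, in non-increasing
order: `xiT E A hE i` is `ξ_{i+1}(G)` (0-indexed). -/
noncomputable def xiT {n : ℕ} (E A : Fin n → Fin n → ℕ) (hE : ∀ u v, E u v = E v u) :
    Fin (n + n) → ℝ :=
  sortDesc (fun i => (intQ_isHermitian E A hE).eigenvalues (finSumFinEquiv.symm i))

/-- The eigenvalues of the integrated adjacency matrix `𝓘(G)`, in non-increasing order: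
`lamT E A hE i` is `λ_{i+1}(G)` (0-indexed). -/
noncomputable def lamT {n : ℕ} (E A : Fin n → Fin n → ℕ) (hE : ∀ u v, E u v = E v u) :
    Fin (n + n) → ℝ :=
  sortDesc (fun i => (intAdj_isHermitian E A hE).eigenvalues (finSumFinEquiv.symm i))


section Aux

variable {V : Type*} [Fintype V] [DecidableEq V]

lemma lap_posSemidef {m : Type*} [Fintype m] [DecidableEq m] (W : Matrix m m ℝ)
    (hsym : ∀ i j, W i j = W j i) (hnn : ∀ i j, 0 ≤ W i j) :
    (Matrix.diagonal (fun i => ∑ j, W i j) - W).PosSemidef := by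
  rw [Matrix.posSemidef_iff_dotProduct_mulVec]
  constructor
  · refine (Matrix.isHermitian_diagonal _).sub ?_
    show Wᴴ = W
    rw [Matrix.conjTranspose_eq_transpose_of_trivial]
    ext i j; exact hsym j i
  · intro x
    simp only [star_trivial]
    have key : 2 * (x ⬝ᵥ ((Matrix.diagonal (fun i => ∑ j, W i j) - W) *ᵥ x))
        = ∑ i, ∑ j, W i j * (x i - x j) ^ 2 := by
      have h3 : ∑ i, ∑ j, W i j * x j ^ 2 = ∑ i, ∑ j, W i j * x i ^ 2 := by
        rw [Finset.sum_comm]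
        refine Finset.sum_congr rfl fun i _ => Finset.sum_congr rfl fun j _ => ?_
        rw [hsym j i]
      have exp : ∑ i, ∑ j, W i j * (x i - x j) ^ 2
          = (∑ i, ∑ j, W i j * x i ^ 2) + (∑ i, ∑ j, W i j * x j ^ 2)
            - 2 * ∑ i, ∑ j, x i * (W i j * x j) := by
        rw [Finset.mul_sum, ← Finset.sum_add_distrib, ← Finset.sum_sub_distrib]
        refine Finset.sum_congr rfl fun i _ => ?_
        rw [Finset.mul_sum, ← Finset.sum_add_distrib, ← Finset.sum_sub_distrib]
        exact Finset.sum_congr rfl fun j _ => by ring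
      have hD : x ⬝ᵥ ((Matrix.diagonal (fun i => ∑ j, W i j)) *ᵥ x)
          = ∑ i, ∑ j, W i j * x i ^ 2 := by
        simp only [dotProduct, Matrix.mulVec_diagonal]
        refine Finset.sum_congr rfl fun i _ => ?_
        rw [Finset.sum_mul, Finset.mul_sum]
        exact Finset.sum_congr rfl fun j _ => by ring
      have hW : x ⬝ᵥ (W *ᵥ x) = ∑ i, ∑ j, x i * (W i j * x j) := by
        simp only [dotProduct, Matrix.mulVec, Finset.mul_sum]
      rw [Matrix.sub_mulVec, dotProduct_sub, exp, hD, hW, h3]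
      ring
    have pos : 0 ≤ ∑ i, ∑ j, W i j * (x i - x j) ^ 2 :=
      Finset.sum_nonneg fun i _ => Finset.sum_nonneg fun j _ =>
        mul_nonneg (hnn i j) (sq_nonneg _)
    linarith

lemma lap_mulVec_one {m : Type*} [Fintype m] [DecidableEq m] (W : Matrix m m ℝ) :
    (Matrix.diagonal (fun i => ∑ j, W i j) - W) *ᵥ (fun _ => 1) = 0 := by
  funext i
  simp [Matrix.sub_mulVec, Pi.sub_apply, Matrix.mulVec_diagonal, Matrix.mulVec,
    dotProduct, Matrix.diagonal_apply, Finset.sum_ite_eq]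

lemma Au_rowSum (E : V → V → ℕ) (v : V) : ∑ u, Au E v u = ((dU E v : ℕ) : ℝ) := by
  unfold Au dU
  push_cast
  rw [← Finset.sum_erase_add _ _ (Finset.mem_univ v)]
  rw [Finset.filter_ne']
  simp only [Matrix.of_apply, if_pos rfl]
  congr 1
  refine Finset.sum_congr rfl fun u hu => ?_
  rw [if_neg (Finset.ne_of_mem_erase hu).symm]

lemma Bm_rowSum (A : V → V → ℕ) (v : V) : ∑ u, Bm A v u = ((dOut A v : ℕ) : ℝ) := by
  unfold Bm dOut
  push_cast
  rfl

lemma Bm_colSum (A : V → V → ℕ) (v : V) : ∑ u, (Bm A)ᵀ v u = ((dIn A v : ℕ) : ℝ) := by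
  unfold Bm dIn
  push_cast
  rfl

lemma sum_dOut_cast (A : V → V → ℕ) : ∑ v, ((dOut A v : ℕ) : ℝ) = numArcs A := by
  unfold dOut numArcs
  push_cast
  rfl

lemma sum_dIn_cast (A : V → V → ℕ) : ∑ v, ((dIn A v : ℕ) : ℝ) = numArcs A := by
  unfold dIn numArcs
  push_cast
  exact Finset.sum_comm

lemma intDeg_eq_diag (E A : V → V → ℕ) :
    intDeg E A = Matrix.diagonal (fun i => ∑ j, intAdj E A i j) := by
  unfold intDeg
  refine congrArg Matrix.diagonal (funext fun i => ?_)
  cases i with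
  | inl v =>
      simp only [Sum.elim_inl, intAdj, Fintype.sum_sum_type,
        Matrix.fromBlocks_apply₁₁, Matrix.fromBlocks_apply₁₂]
      rw [Au_rowSum, Bm_rowSum]
      push_cast; ring
  | inr v =>
      simp only [Sum.elim_inr, intAdj, Fintype.sum_sum_type,
        Matrix.fromBlocks_apply₂₁, Matrix.fromBlocks_apply₂₂]
      rw [Au_rowSum, Bm_colSum]
      push_cast; ring

lemma intLap_eq_diag (E A : V → V → ℕ) :
    intLap E A = Matrix.diagonal (fun i => ∑ j, intAdj E A i j) - intAdj E A := by
  rw [intLap, intDeg_eq_diag]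

lemma intAdj_nonneg (E A : V → V → ℕ) : ∀ i j, 0 ≤ intAdj E A i j := by
  rintro (u | u) (v | v) <;>
    simp only [intAdj, Matrix.fromBlocks_apply₁₁, Matrix.fromBlocks_apply₁₂,
      Matrix.fromBlocks_apply₂₁, Matrix.fromBlocks_apply₂₂, Au, Bm, Matrix.of_apply,
      Matrix.transpose_apply] <;>
    positivity

lemma intAdj_symm (E A : V → V → ℕ) (hE : ∀ u v, E u v = E v u) :
    ∀ i j, intAdj E A i j = intAdj E A j i := by
  intro i j
  have h := intAdj_isHermitian E A hE
  have := congrFun (congrFun h.symm j) i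
  simpa using this.symm

lemma intLap_posSemidef (E A : V → V → ℕ) (hE : ∀ u v, E u v = E v u) :
    (intLap E A).PosSemidef := by
  rw [intLap_eq_diag]
  exact lap_posSemidef _ (intAdj_symm E A hE) (intAdj_nonneg E A)

lemma intLap_mulVec_one (E A : V → V → ℕ) :
    intLap E A *ᵥ (fun _ => 1) = 0 := by
  rw [intLap_eq_diag]
  exact lap_mulVec_one _

lemma quad_x (E A : V → V → ℕ) :
    (Sum.elim (fun _ => (1:ℝ)) fun _ => -1) ⬝ᵥ
      (intLap E A *ᵥ (Sum.elim (fun _ => (1:ℝ)) fun _ => -1)) = 4 * numArcs A := by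
  rw [intLap, Matrix.sub_mulVec, dotProduct_sub]
  have hT1 : (Sum.elim (fun _ => (1:ℝ)) fun _ => -1) ⬝ᵥ
      (intDeg E A *ᵥ (Sum.elim (fun _ => (1:ℝ)) fun _ => -1))
      = 2 * (∑ v, ((dU E v : ℕ) : ℝ)) + 2 * numArcs A := by
    simp only [dotProduct, intDeg, Matrix.mulVec_diagonal, Fintype.sum_sum_type,
      Sum.elim_inl, Sum.elim_inr]
    push_cast
    simp only [mul_one, one_mul, neg_mul, mul_neg, neg_neg]
    rw [Finset.sum_add_distrib, Finset.sum_add_distrib, sum_dOut_cast, sum_dIn_cast]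
    ring
  have hT2 : (Sum.elim (fun _ => (1:ℝ)) fun _ => -1) ⬝ᵥ
      (intAdj E A *ᵥ (Sum.elim (fun _ => (1:ℝ)) fun _ => -1))
      = 2 * (∑ v, ((dU E v : ℕ) : ℝ)) - 2 * numArcs A := by
    simp only [dotProduct, Matrix.mulVec, Fintype.sum_sum_type, intAdj,
      Matrix.fromBlocks_apply₁₁, Matrix.fromBlocks_apply₁₂, Matrix.fromBlocks_apply₂₁,
      Matrix.fromBlocks_apply₂₂, Sum.elim_inl, Sum.elim_inr, dotProduct]
    simp only [mul_one, one_mul, neg_mul, mul_neg, neg_neg]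
    have h1 : ∀ v : V, ∑ u, Au E v u = ((dU E v : ℕ) : ℝ) := Au_rowSum E
    have h2 : ∀ v : V, ∑ u, Bm A v u = ((dOut A v : ℕ) : ℝ) := Bm_rowSum A
    have h3 : ∀ v : V, ∑ u, (Bm A)ᵀ v u = ((dIn A v : ℕ) : ℝ) := Bm_colSum A
    simp only [Finset.sum_add_distrib, Finset.sum_sub_distrib, Finset.sum_neg_distrib]
    rw [Finset.sum_congr rfl fun v _ => h1 v,
        Finset.sum_congr rfl fun v _ => h2 v,
        Finset.sum_congr rfl fun v _ => h3 v,
        sum_dOut_cast, sum_dIn_cast]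
    ring
  rw [hT1, hT2]
  ring

lemma sortDesc_is_max {N : ℕ} (f : Fin N → ℝ) (hN : 0 < N) (i : Fin N) :
    f i ≤ sortDesc f ⟨0, hN⟩ := by
  unfold sortDesc
  have hrev : (⟨0, hN⟩ : Fin N).rev = ⟨N - 1, by omega⟩ := by
    rw [Fin.ext_iff]; simp [Fin.rev]
  rw [hrev]
  have h2 : (Tuple.sort f).symm i ≤ ⟨N - 1, by omega⟩ := by
    rw [Fin.le_def]
    have := ((Tuple.sort f).symm i).isLt
    simp only
    omega
  have h1 : (f ∘ Tuple.sort f) ((Tuple.sort f).symm i) = f i := by simp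
  calc f i = (f ∘ Tuple.sort f) ((Tuple.sort f).symm i) := h1.symm
    _ ≤ (f ∘ Tuple.sort f) ⟨N - 1, by omega⟩ := Tuple.monotone_sort f h2

lemma sortDesc_second_min {N : ℕ} (hN : 2 ≤ N) (f : Fin N → ℝ) :
    ∃ i₀ i₁ : Fin N, sortDesc f ⟨N - 2, by omega⟩ = f i₁ ∧
      ∀ i, i ≠ i₀ → sortDesc f ⟨N - 2, by omega⟩ ≤ f i := by
  have hrev : (⟨N - 2, by omega⟩ : Fin N).rev = ⟨1, by omega⟩ := by
    rw [Fin.ext_iff]; simp [Fin.rev]; omega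
  have hval : sortDesc f ⟨N - 2, by omega⟩ = f (Tuple.sort f ⟨1, by omega⟩) := by
    unfold sortDesc
    rw [hrev]
    rfl
  refine ⟨Tuple.sort f ⟨0, by omega⟩, Tuple.sort f ⟨1, by omega⟩, hval, ?_⟩
  intro i hi
  have hk : (Tuple.sort f).symm i ≠ ⟨0, by omega⟩ := by
    intro h
    apply hi
    rw [← Equiv.apply_symm_apply (Tuple.sort f) i, h]
  have h2 : (⟨1, by omega⟩ : Fin N) ≤ (Tuple.sort f).symm i := by
    rw [Fin.le_def]
    have h3 : ((Tuple.sort f).symm i).val ≠ 0 := fun h0 => hk (Fin.ext h0)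
    simp only
    omega
  have h1 : (f ∘ Tuple.sort f) ((Tuple.sort f).symm i) = f i := by simp
  rw [hval]
  calc f (Tuple.sort f ⟨1, by omega⟩) = (f ∘ Tuple.sort f) ⟨1, by omega⟩ := rfl
    _ ≤ (f ∘ Tuple.sort f) ((Tuple.sort f).symm i) := Tuple.monotone_sort f h2
    _ = f i := h1

end Aux

set_option maxHeartbeats 2000000 in
/-- for every mixed graph `G` on `n ≥ 1` vertices,
`ν_{2n−1}(G) ≤ 2·a(G)/n ≤ ν₁(G)`. -/
theorem stmt10 (n : ℕ) (hn : 0 < n) (E A : Fin n → Fin n → ℕ)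
    (hE : ∀ u v, E u v = E v u) :
    nuT E A hE ⟨n + n - 2, by omega⟩ ≤ 2 * numArcs A / (n : ℝ) ∧
      2 * numArcs A / (n : ℝ) ≤ nuT E A hE ⟨0, by omega⟩ := by
  have hL := intLap_isHermitian E A hE
  set U : Matrix (Fin n ⊕ Fin n) (Fin n ⊕ Fin n) ℝ := hL.eigenvectorUnitary.1
    with hUdef
  have hUS : U * star U = 1 := Matrix.mem_unitaryGroup_iff.mp hL.eigenvectorUnitary.2
  have hSU : star U * U = 1 := Matrix.mem_unitaryGroup_iff'.mp hL.eigenvectorUnitary.2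
  set μ : Fin n ⊕ Fin n → ℝ := hL.eigenvalues with hμdef
  set S : Matrix (Fin n ⊕ Fin n) (Fin n ⊕ Fin n) ℝ := star U with hSdef
  have hspec : intLap E A = U * Matrix.diagonal μ * S := by
    have hdiag : Matrix.diagonal (RCLike.ofReal ∘ hL.eigenvalues) = Matrix.diagonal μ := by
      rw [RCLike.ofReal_real_eq_id, Function.id_comp]
    rw [hL.spectral_theorem, hdiag, Unitary.conjStarAlgAut_apply]
  have hST : Sᵀ = U := by
    rw [hSdef, Matrix.star_eq_conjTranspose,
      Matrix.conjTranspose_eq_transpose_of_trivial, Matrix.transpose_transpose]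
  have hUT : Uᵀ = S := by rw [← hST, Matrix.transpose_transpose]
  set xv : Fin n ⊕ Fin n → ℝ := Sum.elim (fun _ => 1) (fun _ => -1) with hxvdef
  set ov : Fin n ⊕ Fin n → ℝ := fun _ => 1 with hovdef
  set z : Fin n ⊕ Fin n → ℝ := S *ᵥ xv with hzdef
  set w : Fin n ⊕ Fin n → ℝ := S *ᵥ ov with hwdef
  have dot_pres : ∀ p q : Fin n ⊕ Fin n → ℝ, (S *ᵥ p) ⬝ᵥ (S *ᵥ q) = p ⬝ᵥ q := by
    intro p q
    rw [Matrix.dotProduct_mulVec, ← Matrix.mulVec_transpose, hST, Matrix.mulVec_mulVec,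
      hUS, Matrix.one_mulVec]
  have quad_pres : ∀ p q : Fin n ⊕ Fin n → ℝ,
      p ⬝ᵥ (intLap E A *ᵥ q) = ∑ i, μ i * ((S *ᵥ p) i * (S *ᵥ q) i) := by
    intro p q
    conv_lhs => rw [hspec]
    rw [← Matrix.mulVec_mulVec, ← Matrix.mulVec_mulVec, Matrix.dotProduct_mulVec,
      ← Matrix.mulVec_transpose, hUT]
    simp only [dotProduct, Matrix.mulVec_diagonal]
    exact Finset.sum_congr rfl fun i _ => by ring
  have hDw : ∀ i, μ i * w i = 0 := by
    have h2 : Matrix.diagonal μ *ᵥ w = 0 := by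
      have h1 : S *ᵥ (intLap E A *ᵥ ov) = 0 := by
        rw [intLap_mulVec_one E A, Matrix.mulVec_zero]
      rw [hspec, ← Matrix.mulVec_mulVec, ← Matrix.mulVec_mulVec, Matrix.mulVec_mulVec,
        hSU, Matrix.one_mulVec] at h1
      exact h1
    intro i
    have := congrFun h2 i
    simpa [Matrix.mulVec_diagonal] using this
  have hxx : xv ⬝ᵥ xv = (n : ℝ) + n := by
    simp [hxvdef, dotProduct, Fintype.sum_sum_type]
  have hoo : ov ⬝ᵥ ov = (n : ℝ) + n := by
    simp [hovdef, dotProduct, Fintype.sum_sum_type]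
  have hxo : xv ⬝ᵥ ov = 0 := by
    simp [hxvdef, hovdef, dotProduct, Fintype.sum_sum_type]
  have hzz : ∑ i, z i * z i = (n : ℝ) + n := (dot_pres xv xv).trans hxx
  have hww : ∑ i, w i * w i = (n : ℝ) + n := (dot_pres ov ov).trans hoo
  have hzw : ∑ i, z i * w i = 0 := (dot_pres xv ov).trans hxo
  have hQ : ∑ i, μ i * (z i * z i) = 4 * numArcs A := by
    rw [← quad_pres xv xv]
    exact quad_x E A
  have hPSD := intLap_posSemidef E A hE
  have hMuNonneg : ∀ j, 0 ≤ μ j := fun j => hPSD.eigenvalues_nonneg j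
  have hn' : (0 : ℝ) < n := by exact_mod_cast hn
  have hArcs : 0 ≤ numArcs A := by
    refine Finset.sum_nonneg fun u _ => Finset.sum_nonneg fun v _ => by positivity
  -- sorted eigenvalue bookkeeping
  obtain ⟨i₀', i₁', hval, hle'⟩ := sortDesc_second_min (show 2 ≤ n + n by omega)
      (fun i : Fin (n + n) => μ (finSumFinEquiv.symm i))
  obtain ⟨m2, hm2eq⟩ : ∃ x : ℝ, nuT E A hE ⟨n + n - 2, by omega⟩ = x := ⟨_, rfl⟩
  obtain ⟨M, hMeq⟩ : ∃ x : ℝ, nuT E A hE ⟨0, by omega⟩ = x := ⟨_, rfl⟩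
  set i₀ : Fin n ⊕ Fin n := finSumFinEquiv.symm i₀' with hi₀def
  have hle : ∀ j : Fin n ⊕ Fin n, j ≠ i₀ → m2 ≤ μ j := by
    intro j hj
    rw [← hm2eq]
    have h := hle' (finSumFinEquiv j) (by
      intro h
      apply hj
      rw [hi₀def, ← h, Equiv.symm_apply_apply])
    simp at h
    exact h
  have hm2val : m2 = μ (finSumFinEquiv.symm i₁') := by
    rw [← hm2eq]
    exact hval
  have hm2nonneg : 0 ≤ m2 := by
    rw [hm2val]
    exact hMuNonneg _
  have hMax : ∀ j : Fin n ⊕ Fin n, μ j ≤ M := by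
    intro j
    rw [← hMeq]
    have h := sortDesc_is_max (fun i : Fin (n + n) => μ (finSumFinEquiv.symm i))
      (show 0 < n + n by omega) (finSumFinEquiv j)
    simp at h
    exact h
  constructor
  · -- second smallest ≤ 2a/n
    rw [hm2eq]
    have key : m2 * ((n : ℝ) + n) ≤ 4 * numArcs A := by
      by_cases hcase : ∃ j, j ≠ i₀ ∧ w j ≠ 0
      · obtain ⟨j, hj1, hj2⟩ := hcase
        have hμj : μ j = 0 := by
          rcases mul_eq_zero.mp (hDw j) with h | h
          · exact h
          · exact absurd h hj2
        have := hle j hj1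
        rw [hμj] at this
        nlinarith
      · push_neg at hcase
        have hw0 : ∀ j, j ≠ i₀ → w j = 0 := hcase
        have hwi0 : w i₀ ≠ 0 := by
          intro h0
          have hz : ∑ i, w i * w i = 0 := by
            refine Finset.sum_eq_zero fun j _ => ?_
            by_cases hj : j = i₀
            · rw [hj, h0, mul_zero]
            · rw [hw0 j hj, mul_zero]
          rw [hww] at hz
          have : (0:ℝ) < (n:ℝ) + n := by linarith
          linarith
        obtain ⟨c, hcdef⟩ : ∃ c : ℝ, z i₀ / w i₀ = c := ⟨_, rfl⟩
        obtain ⟨v, hvdef⟩ : ∃ v : Fin n ⊕ Fin n → ℝ, (fun j => z j - c * w j) = v := ⟨_, rfl⟩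
        have hvj : ∀ j, v j = z j - c * w j := fun j => by rw [← hvdef]
        have hvi0 : v i₀ = 0 := by
          rw [hvj, ← hcdef]
          field_simp
          ring
        have hμv : ∀ j, μ j * (v j * v j) = μ j * (z j * z j) := by
          intro j
          have h0 := hDw j
          rw [hvj]
          linear_combination (c ^ 2 * w j - 2 * c * z j) * h0
        have hsum1 : ∑ j, μ j * (v j * v j) = 4 * numArcs A := by
          rw [Finset.sum_congr rfl fun j _ => hμv j, hQ]
        have hvv : ∑ j, v j * v j = ((n : ℝ) + n) + c ^ 2 * ((n : ℝ) + n) := by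
          have hexp : ∀ j, v j * v j
              = z j * z j - 2 * c * (z j * w j) + c ^ 2 * (w j * w j) := by
            intro j
            rw [hvj]
            ring
          rw [Finset.sum_congr rfl fun j _ => hexp j, Finset.sum_add_distrib,
            Finset.sum_sub_distrib, ← Finset.mul_sum, ← Finset.mul_sum, hzz, hzw, hww]
          ring
        have step : m2 * (∑ j, v j * v j) ≤ ∑ j, μ j * (v j * v j) := by
          rw [Finset.mul_sum]
          refine Finset.sum_le_sum fun j _ => ?_
          by_cases hj : j = i₀
          · rw [hj, hvi0]
            simp
          · exact mul_le_mul_of_nonneg_right (hle j hj) (mul_self_nonneg _)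
        rw [hvv, hsum1] at step
        nlinarith [sq_nonneg c]
    rw [le_div_iff₀ hn']
    nlinarith
  · -- 2a/n ≤ max
    rw [hMeq]
    have key : 4 * numArcs A ≤ M * ((n : ℝ) + n) := by
      calc 4 * numArcs A = ∑ i, μ i * (z i * z i) := hQ.symm
        _ ≤ ∑ i, M * (z i * z i) :=
            Finset.sum_le_sum fun i _ =>
              mul_le_mul_of_nonneg_right (hMax i) (mul_self_nonneg _)
        _ = M * ((n : ℝ) + n) := by rw [← Finset.mul_sum, hzz]
    rw [div_le_iff₀ hn']
    nlinarith
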